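/- arXiv:2402.09827 — 7 statements merged into one kernel-verified Lean document; each statement's English description precedes it below -/
import Mathlib

section
/- Let d ≥ 2 be a squarefree integer with d ≡ 7 (mod 8) and let (x, y) be the fundamental solution of the Pell equation x² − d·y² = 1. Suppose there exist positive integers k, u, v such that k is odd, v is odd, u is powerful, d divides v, and (x + y·√d)^k = u + v·√d. Then y is odd. -/
def IsPowerful (n : ℤ) : Prop := ∀ p : ℤ, Prime p → p ∣ n → p ^ 2 ∣ n

lemma y_dvd_pow_y {d : ℤ} (a : Pell.Solution₁ d) (k : ℕ) : a.y ∣ (a ^ k).y := by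
  induction k with
  | zero => simp [Pell.Solution₁.y_one]
  | succ n ih =>
    rw [pow_succ, Pell.Solution₁.y_mul]
    exact dvd_add (dvd_mul_left _ _) (ih.mul_right _)

/-- Let `d ≥ 2` be a squarefree integer with `d ≡ 7 (mod 8)` and let `(x, y)` be the
fundamental solution of the Pell equation `x² − d·y² = 1`. Suppose there exist positive
integers `k, u, v` such that `k` is odd, `v` is odd, `u` is powerful, `d ∣ v` and
`(x + y·√d)^k = u + v·√d`. Then `y` is odd. -/
theorem stmt_0 (d : ℤ) (hd2 : 2 ≤ d) (hdsf : Squarefree d) (hd8 : d % 8 = 7)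
    (a : Pell.Solution₁ d) (ha : Pell.IsFundamental a)
    (h : ∃ (k : ℕ) (u v : ℤ), 0 < k ∧ 0 < u ∧ 0 < v ∧ Odd k ∧ Odd v ∧ IsPowerful u ∧
      d ∣ v ∧ (a ^ k).x = u ∧ (a ^ k).y = v) :
    Odd a.y := by
  obtain ⟨k, u, v, -, -, -, -, hv, -, -, -, hy⟩ := h
  have hdvd : a.y ∣ v := hy ▸ y_dvd_pow_y a k
  rcases Int.even_or_odd a.y with he | ho
  · obtain ⟨c, hc⟩ := he.two_dvd.trans hdvd
    obtain ⟨m, hm⟩ := hv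
    omega
  · exact ho
end

section
/- Let p and q be primes with p ≡ 1 (mod 4) and q ≡ 3 (mod 4), let d = p·q, and let (x, y) be the fundamental solution of the Pell equation x² − d·y² = 1. If y is even, then there exist integers a and b with |p·a² − q·b²| = 1. -/
lemma stmt_3_pos_factor {w z : ℤ} (hw : 0 < w) (h : 0 < w * z) : 0 < z := by
  rcases mul_pos_iff.mp h with ⟨_, h2⟩ | ⟨h1, _⟩
  · exact h2
  · linarith

/-- Let `p, q` be primes with `p ≡ 1 (mod 4)`, `q ≡ 3 (mod 4)`, let `d = p·q`, and let
`(x, y)` be the fundamental solution of `x² − d·y² = 1`. If `y` is even, then there are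
integers `a, b` with `|p·a² − q·b²| = 1`. -/
theorem stmt_3 (p q : ℕ) (hp : p.Prime) (hq : q.Prime) (hp4 : p % 4 = 1) (hq4 : q % 4 = 3)
    (d : ℤ) (hd : d = (p : ℤ) * q)
    (a : Pell.Solution₁ d) (ha : Pell.IsFundamental a) (hy : Even a.y) :
    ∃ s t : ℤ, |(p : ℤ) * s ^ 2 - (q : ℤ) * t ^ 2| = 1 := by
  obtain ⟨c, hc⟩ := hy
  have hprop := a.prop
  have hx1 : 1 < a.x := ha.1
  have hpp : Prime (p : ℤ) := Nat.prime_iff_prime_int.mp hp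
  have hqp : Prime (q : ℤ) := Nat.prime_iff_prime_int.mp hq
  have hp0 : (0:ℤ) < p := by exact_mod_cast hp.pos
  have hq0 : (0:ℤ) < q := by exact_mod_cast hq.pos
  have hd0 : (0:ℤ) < d := by rw [hd]; positivity
  -- a.x is odd
  have hxodd : Odd a.x := by
    rcases Int.even_or_odd a.x with he | ho
    · exfalso
      obtain ⟨e, he⟩ := he
      have : (e + e)^2 - d * (c + c)^2 = 1 := by rw [← he, ← hc]; exact hprop
      have h4 : 4 * e^2 - 4 * (d * c^2) = 1 := by linarith [this, sq_nonneg e]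
      omega
    · exact ho
  obtain ⟨k, hk⟩ := hxodd
  have hk1 : 1 ≤ k := by omega
  -- key factorization: k * (k+1) = d * c^2
  have hkey : k * (k + 1) = d * c ^ 2 := by
    have : (2*k+1)^2 - d * (c+c)^2 = 1 := by rw [← hk, ← hc]; exact hprop
    nlinarith [this]
  have hcop : IsCoprime k (k + 1) := ⟨-1, 1, by ring⟩
  have hPdvd : (p : ℤ) ∣ k * (k + 1) := ⟨(q : ℤ) * c ^ 2, by rw [hkey, hd]; ring⟩
  have hQdvd : (q : ℤ) ∣ k * (k + 1) := ⟨(p : ℤ) * c ^ 2, by rw [hkey, hd]; ring⟩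
  have hpq : IsCoprime (p : ℤ) (q : ℤ) := by
    rw [Int.isCoprime_iff_gcd_eq_one]
    simpa [Int.gcd_natCast_natCast] using (Nat.coprime_primes hp hq).mpr (by omega)
  rcases hpp.2.2 _ _ hPdvd with hP | hP <;> rcases hqp.2.2 _ _ hQdvd with hQ | hQ
  · -- p ∣ k, q ∣ k : get smaller solution, contradiction with fundamentality
    exfalso
    obtain ⟨u, hu⟩ := hpq.mul_dvd hP hQ
    have huk : k = d * u := by rw [hd, hu]
    have hcancel : u * (k + 1) = c ^ 2 := by
      have : d * (u * (k + 1)) = d * c ^ 2 := by rw [← hkey, huk]; ring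
      exact mul_left_cancel₀ hd0.ne' this
    have hcop2 : IsCoprime u (k + 1) :=
      hcop.of_isCoprime_of_dvd_left ⟨d, by rw [huk]; ring⟩
    obtain ⟨t, ht⟩ := Int.sq_of_isCoprime hcop2 hcancel
    obtain ⟨s, hs⟩ := Int.sq_of_isCoprime hcop2.symm (by rw [mul_comm]; exact hcancel)
    have hu0 : 0 < u := stmt_3_pos_factor hd0 (by rw [← huk]; omega)
    have hu2 : u = t ^ 2 := by
      rcases ht with h | h; exacts [h, by linarith [sq_nonneg t]]
    have hs2 : k + 1 = s ^ 2 := by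
      rcases hs with h | h; exacts [h, by linarith [sq_nonneg s]]
    have hsol : |s| ^ 2 - d * t ^ 2 = 1 := by
      rw [sq_abs, ← hs2, ← hu2, ← huk]; ring
    have hs1 : 1 < |s| := by nlinarith [sq_abs s, abs_nonneg s]
    have hmin : a.x ≤ (Pell.Solution₁.mk |s| t hsol).x :=
      ha.2.2 (by rw [Pell.Solution₁.x_mk]; exact hs1)
    rw [Pell.Solution₁.x_mk, hk] at hmin
    nlinarith [sq_abs s, abs_nonneg s, hs1, hmin]
  · -- p ∣ k, q ∣ k + 1
    obtain ⟨u, hu⟩ := hP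
    obtain ⟨v, hv⟩ := hQ
    have hcancel : u * v = c ^ 2 := by
      have hpq0 : (0:ℤ) < (p:ℤ) * q := by positivity
      have : (p:ℤ) * q * (u * v) = (p:ℤ) * q * c ^ 2 := by
        rw [show (p:ℤ) * q * (u * v) = ((p:ℤ) * u) * ((q:ℤ) * v) from by ring,
          ← hu, ← hv, hkey, hd]
      exact mul_left_cancel₀ hpq0.ne' this
    have hcop2 : IsCoprime u v :=
      (hcop.of_isCoprime_of_dvd_left ⟨p, by rw [hu]; ring⟩).of_isCoprime_of_dvd_right
        ⟨q, by rw [hv]; ring⟩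
    obtain ⟨t, ht⟩ := Int.sq_of_isCoprime hcop2 hcancel
    obtain ⟨s, hs⟩ := Int.sq_of_isCoprime hcop2.symm (by rw [mul_comm]; exact hcancel)
    have hu0 : 0 < u := stmt_3_pos_factor hp0 (by rw [← hu]; omega)
    have hv0 : 0 < v := stmt_3_pos_factor hq0 (by rw [← hv]; omega)
    have hu2 : u = t ^ 2 := by
      rcases ht with h | h; exacts [h, by linarith [sq_nonneg t]]
    have hv2 : v = s ^ 2 := by
      rcases hs with h | h; exacts [h, by linarith [sq_nonneg s]]
    refine ⟨t, s, ?_⟩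
    have : (p:ℤ) * t ^ 2 - (q:ℤ) * s ^ 2 = -1 := by
      rw [← hu2, ← hv2, ← hu, ← hv]; ring
    rw [this]; norm_num
  · -- p ∣ k + 1, q ∣ k
    obtain ⟨u, hu⟩ := hP
    obtain ⟨v, hv⟩ := hQ
    have hcancel : v * u = c ^ 2 := by
      have hpq0 : (0:ℤ) < (p:ℤ) * q := by positivity
      have : (p:ℤ) * q * (v * u) = (p:ℤ) * q * c ^ 2 := by
        rw [show (p:ℤ) * q * (v * u) = ((q:ℤ) * v) * ((p:ℤ) * u) from by ring,
          ← hu, ← hv, hkey, hd]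
      exact mul_left_cancel₀ hpq0.ne' this
    have hcop2 : IsCoprime v u :=
      (hcop.of_isCoprime_of_dvd_left ⟨q, by rw [hv]; ring⟩).of_isCoprime_of_dvd_right
        ⟨p, by rw [hu]; ring⟩
    obtain ⟨t, ht⟩ := Int.sq_of_isCoprime hcop2 hcancel
    obtain ⟨s, hs⟩ := Int.sq_of_isCoprime hcop2.symm (by rw [mul_comm]; exact hcancel)
    have hu0 : 0 < u := stmt_3_pos_factor hp0 (by rw [← hu]; omega)
    have hv0 : 0 < v := stmt_3_pos_factor hq0 (by rw [← hv]; omega)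
    have hv2 : v = t ^ 2 := by
      rcases ht with h | h; exacts [h, by linarith [sq_nonneg t]]
    have hu2 : u = s ^ 2 := by
      rcases hs with h | h; exacts [h, by linarith [sq_nonneg s]]
    refine ⟨s, t, ?_⟩
    have : (p:ℤ) * s ^ 2 - (q:ℤ) * t ^ 2 = 1 := by
      rw [← hu2, ← hv2, ← hu, ← hv]; ring
    rw [this]; norm_num
  · -- p ∣ k + 1, q ∣ k + 1 : contradiction mod 4
    exfalso
    obtain ⟨u, hu⟩ := hpq.mul_dvd hP hQ
    have huk : k + 1 = d * u := by rw [hd, hu]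
    have hcancel : k * u = c ^ 2 := by
      have : d * (k * u) = d * c ^ 2 := by rw [← hkey, huk]; ring
      exact mul_left_cancel₀ hd0.ne' this
    have hcop2 : IsCoprime k u :=
      hcop.of_isCoprime_of_dvd_right ⟨d, by rw [huk]; ring⟩
    obtain ⟨t, ht⟩ := Int.sq_of_isCoprime hcop2 hcancel
    obtain ⟨s, hs⟩ := Int.sq_of_isCoprime hcop2.symm (by rw [mul_comm]; exact hcancel)
    have hu0 : 0 < u := stmt_3_pos_factor hd0 (by rw [← huk]; omega)
    have ht2 : k = t ^ 2 := by
      rcases ht with h | h; exacts [h, by linarith [sq_nonneg t]]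
    have hs2 : u = s ^ 2 := by
      rcases hs with h | h; exacts [h, by linarith [sq_nonneg s]]
    have heq : t ^ 2 + 1 = (p:ℤ) * q * s ^ 2 := by
      rw [← ht2, ← hs2, ← hd]; omega
    have h4 : ((t : ZMod 4)) ^ 2 + 1 = (p : ZMod 4) * (q : ZMod 4) * ((s : ZMod 4)) ^ 2 := by
      have := congrArg (Int.cast : ℤ → ZMod 4) heq
      push_cast at this
      exact_mod_cast this
    have hpz : (p : ZMod 4) = 1 := by
      rw [← ZMod.natCast_mod p 4, hp4]; rfl
    have hqz : (q : ZMod 4) = 3 := by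
      rw [← ZMod.natCast_mod q 4, hq4]; rfl
    rw [hpz, hqz] at h4
    have : ∀ x y : ZMod 4, x ^ 2 + 1 ≠ 1 * 3 * y ^ 2 := by decide
    exact this _ _ h4
end

section
/- Let p and q be primes with p ≡ 1 (mod 4) and q ≡ 3 (mod 4), let d = p·q, and let (x, y) be the fundamental solution of the Pell equation x² − d·y² = 1. If y is odd, then there exist integers a and b with |a² − d·b²| = 2, or there exist integers a and b with |p·a² − q·b²| = 2. -/
lemma aux_sq {m n c : ℤ} (hm : 0 < m) (h : IsCoprime m n) (he : m * n = c ^ 2) :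
    ∃ s : ℤ, m = s ^ 2 := by
  obtain ⟨s, hs | hs⟩ := Int.sq_of_isCoprime h he
  · exact ⟨s, hs⟩
  · exfalso; nlinarith [sq_nonneg s]

/-- Let `p, q` be primes with `p ≡ 1 (mod 4)`, `q ≡ 3 (mod 4)`, let `d = p·q`, and let
`(x, y)` be the fundamental solution of `x² − d·y² = 1`. If `y` is odd, then there are
integers `a, b` with `|a² − d·b²| = 2`, or there are integers `a, b` with
`|p·a² − q·b²| = 2`. -/
theorem stmt_4 (p q : ℕ) (hp : p.Prime) (hq : q.Prime) (hp4 : p % 4 = 1) (hq4 : q % 4 = 3)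
    (d : ℤ) (hd : d = (p : ℤ) * q)
    (a : Pell.Solution₁ d) (ha : Pell.IsFundamental a) (hy : Odd a.y) :
    (∃ s t : ℤ, |s ^ 2 - d * t ^ 2| = 2) ∨ (∃ s t : ℤ, |(p : ℤ) * s ^ 2 - (q : ℤ) * t ^ 2| = 2) := by
  set x := a.x with hxdef
  set y := a.y with hydef
  have hprop : x ^ 2 - d * y ^ 2 = 1 := a.prop
  have hx1 : 1 < x := ha.1
  have hpZ : Prime (p : ℤ) := Nat.prime_iff_prime_int.mp hp
  have hqZ : Prime (q : ℤ) := Nat.prime_iff_prime_int.mp hq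
  have hp0 : (0 : ℤ) < (p : ℤ) := by exact_mod_cast hp.pos
  have hq0 : (0 : ℤ) < (q : ℤ) := by exact_mod_cast hq.pos
  have hPpos : (0 : ℤ) < (p : ℤ) * q := by positivity
  have hpq : IsCoprime (p : ℤ) (q : ℤ) := by
    rw [Int.isCoprime_iff_gcd_eq_one]
    simpa using (Nat.coprime_primes hp hq).mpr (by omega)
  -- d is odd, y odd ⇒ x even
  have hdodd : Odd d := by
    rw [hd]
    refine Odd.mul ?_ ?_ <;> rw [Int.odd_coe_nat] <;> exact Nat.odd_iff.mpr (by omega)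
  have hxeven : Even x := by
    rcases Int.even_or_odd x with h | h
    · exact h
    · exfalso
      have h1 : Odd (x ^ 2) := h.pow
      have h2 : Odd (d * y ^ 2) := hdodd.mul hy.pow
      have h3 := h1.sub_odd h2
      rw [hprop] at h3
      exact (Int.not_odd_iff_even.mpr h3) odd_one
  -- coprimality of x-1 and x+1
  have hxodd : Odd (x - 1) := hxeven.sub_odd odd_one
  have hcop2 : IsCoprime (x - 1) (2 : ℤ) := by
    obtain ⟨k, hk⟩ := hxodd
    exact ⟨1, -k, by linarith⟩
  have hcop : IsCoprime (x - 1) (x + 1) := by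
    have he : x + 1 = 2 + (x - 1) * 1 := by ring
    rw [he]; exact hcop2.add_mul_left_right 1
  have hmn : (x - 1) * (x + 1) = (p : ℤ) * q * y ^ 2 := by
    rw [← hd]; nlinarith [hprop]
  have hmpos : 0 < x - 1 := by omega
  have hnpos : 0 < x + 1 := by omega
  have hp_dvd : (p : ℤ) ∣ (x - 1) * (x + 1) := ⟨q * y ^ 2, by linarith [hmn]⟩
  have hq_dvd : (q : ℤ) ∣ (x - 1) * (x + 1) := ⟨p * y ^ 2, by linarith [hmn]⟩
  rcases hpZ.dvd_or_dvd hp_dvd with hpm | hpn <;>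
    rcases hqZ.dvd_or_dvd hq_dvd with hqm | hqn
  · -- p ∣ m, q ∣ m : m = pq s², n = t²
    left
    obtain ⟨m', hm'⟩ := hpq.mul_dvd hpm hqm
    have hm'pos : 0 < m' := by nlinarith
    have hkey : m' * (x + 1) = y ^ 2 := by
      apply mul_left_cancel₀ hPpos.ne'
      rw [← hmn, hm']; ring
    have hcop' : IsCoprime m' (x + 1) :=
      hcop.of_isCoprime_of_dvd_left ⟨(p : ℤ) * q, by linarith [hm']⟩
    obtain ⟨s, hs⟩ := aux_sq hm'pos hcop' hkey
    obtain ⟨t, ht⟩ := aux_sq hnpos hcop'.symm (by rw [← hkey]; ring)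
    refine ⟨t, s, ?_⟩
    have h2 : t ^ 2 - d * s ^ 2 = 2 := by rw [hd, ← ht, ← hs]; linarith [hm']
    rw [h2]; norm_num
  · -- p ∣ m, q ∣ n
    right
    obtain ⟨m', hm'⟩ := hpm
    obtain ⟨n', hn'⟩ := hqn
    have hm'pos : 0 < m' := by nlinarith [hp0]
    have hn'pos : 0 < n' := by nlinarith [hq0]
    have hkey : m' * n' = y ^ 2 := by
      apply mul_left_cancel₀ hPpos.ne'
      rw [← hmn, hm', hn']; ring
    have hcop' : IsCoprime m' n' :=
      (hcop.of_isCoprime_of_dvd_left ⟨(p : ℤ), by linarith [hm']⟩).of_isCoprime_of_dvd_right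
        ⟨(q : ℤ), by linarith [hn']⟩
    obtain ⟨s, hs⟩ := aux_sq hm'pos hcop' hkey
    obtain ⟨t, ht⟩ := aux_sq hn'pos hcop'.symm (by rw [← hkey]; ring)
    refine ⟨s, t, ?_⟩
    have h2 : (p : ℤ) * s ^ 2 - (q : ℤ) * t ^ 2 = -2 := by
      rw [← hs, ← ht]; linarith [hm', hn']
    rw [h2]; norm_num
  · -- p ∣ n, q ∣ m
    right
    obtain ⟨n', hn'⟩ := hpn
    obtain ⟨m', hm'⟩ := hqm
    have hm'pos : 0 < m' := by nlinarith [hq0]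
    have hn'pos : 0 < n' := by nlinarith [hp0]
    have hkey : m' * n' = y ^ 2 := by
      apply mul_left_cancel₀ hPpos.ne'
      rw [← hmn, hm', hn']; ring
    have hcop' : IsCoprime m' n' :=
      (hcop.of_isCoprime_of_dvd_left ⟨(q : ℤ), by linarith [hm']⟩).of_isCoprime_of_dvd_right
        ⟨(p : ℤ), by linarith [hn']⟩
    obtain ⟨t, ht⟩ := aux_sq hm'pos hcop' hkey
    obtain ⟨s, hs⟩ := aux_sq hn'pos hcop'.symm (by rw [← hkey]; ring)
    refine ⟨s, t, ?_⟩
    have h2 : (p : ℤ) * s ^ 2 - (q : ℤ) * t ^ 2 = 2 := by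
      rw [← hs, ← ht]; linarith [hm', hn']
    rw [h2]; norm_num
  · -- p ∣ n, q ∣ n
    left
    obtain ⟨n', hn'⟩ := hpq.mul_dvd hpn hqn
    have hn'pos : 0 < n' := by nlinarith
    have hkey : (x - 1) * n' = y ^ 2 := by
      apply mul_left_cancel₀ hPpos.ne'
      rw [← hmn, hn']; ring
    have hcop' : IsCoprime (x - 1) n' :=
      hcop.of_isCoprime_of_dvd_right ⟨(p : ℤ) * q, by linarith [hn']⟩
    obtain ⟨s, hs⟩ := aux_sq hmpos hcop' hkey
    obtain ⟨t, ht⟩ := aux_sq hn'pos hcop'.symm (by rw [← hkey]; ring)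
    refine ⟨s, t, ?_⟩
    have h2 : s ^ 2 - d * t ^ 2 = -2 := by rw [hd, ← hs, ← ht]; linarith [hn']
    rw [h2]; norm_num
end

section
/- Let p and q be primes with p ≡ 5 (mod 8) and q ≡ 3 (mod 4), let d = p·q, and let (x, y) be the fundamental solution of the Pell equation x² − d·y² = 1. Then y is odd if and only if p is a quadratic non-residue modulo q (equivalently, the Legendre symbol (p/q) equals −1). -/
private lemma legendreSym_congr (p : ℕ) [Fact p.Prime] {a b : ℤ}
    (h : ((a : ZMod p)) = (b : ZMod p)) : legendreSym p a = legendreSym p b := by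
  simp only [legendreSym, h]

private lemma legendre_helper {r : ℕ} [Fact r.Prime] (s v : ℕ) (c : ℤ)
    (hv : ¬ r ∣ v) (h : (s : ZMod r) * (v : ZMod r) ^ 2 = (c : ZMod r)) :
    legendreSym r s = legendreSym r c := by
  have hv' : ((v : ℤ) : ZMod r) ≠ 0 := by
    rw [Int.cast_natCast, Ne, ZMod.natCast_eq_zero_iff]; exact hv
  have h1 : legendreSym r ((s : ℤ) * (v : ℤ) ^ 2) = legendreSym r c :=
    legendreSym_congr r (by push_cast; exact h)
  rwa [legendreSym.mul, legendreSym.sq_one' r hv', mul_one] at h1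

private lemma dvd_prime_mul_prime {p q a : ℕ} (hp : p.Prime) (hq : q.Prime)
    (h : a ∣ p * q) : a = 1 ∨ a = p ∨ a = q ∨ a = p * q := by
  by_cases hpa : p ∣ a
  · obtain ⟨a', rfl⟩ := hpa
    have ha' : a' ∣ q := (mul_dvd_mul_iff_left hp.pos.ne').mp h
    rcases (Nat.dvd_prime hq).mp ha' with rfl | rfl
    · right; left; simp
    · right; right; right; rfl
  · have hco : a.Coprime p := ((Nat.Prime.coprime_iff_not_dvd hp).mpr hpa).symm
    have haq : a ∣ q := hco.dvd_of_dvd_mul_left h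
    rcases (Nat.dvd_prime hq).mp haq with rfl | rfl
    · left; rfl
    · right; right; left; rfl

private lemma split_factor {p q : ℕ} (hp : p.Prime) (hq : q.Prime) (hpq : p ≠ q)
    {m n y : ℕ} (hco : m.Coprime n) (h : m * n = p * q * y ^ 2) :
    ∃ u v : ℕ, (m = u ^ 2 ∧ n = p * q * v ^ 2) ∨ (m = p * u ^ 2 ∧ n = q * v ^ 2) ∨
      (m = q * u ^ 2 ∧ n = p * v ^ 2) ∨ (m = p * q * u ^ 2 ∧ n = v ^ 2) := by
  set a := Nat.gcd m (p * q) with ha_def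
  set b := Nat.gcd n (p * q) with hb_def
  have hab_co : a.Coprime b := Nat.Coprime.coprime_dvd_left (Nat.gcd_dvd_left _ _)
    (Nat.Coprime.coprime_dvd_right (Nat.gcd_dvd_left _ _) hco)
  have hpq_co : p.Coprime q := (Nat.coprime_primes hp hq).mpr hpq
  have hdvd1 : a * b ∣ p * q :=
    Nat.Coprime.mul_dvd_of_dvd_of_dvd hab_co (Nat.gcd_dvd_right _ _) (Nat.gcd_dvd_right _ _)
  have hpab : p ∣ a * b := by
    have hpmn : p ∣ m * n := h ▸ ⟨q * y ^ 2, by ring⟩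
    rcases (Nat.Prime.dvd_mul hp).mp hpmn with hpm | hpn
    · exact Dvd.dvd.mul_right (Nat.dvd_gcd hpm ⟨q, rfl⟩) b
    · exact Dvd.dvd.mul_left (Nat.dvd_gcd hpn ⟨q, rfl⟩) a
  have hqab : q ∣ a * b := by
    have hqmn : q ∣ m * n := h ▸ ⟨p * y ^ 2, by ring⟩
    rcases (Nat.Prime.dvd_mul hq).mp hqmn with hm' | hn'
    · exact Dvd.dvd.mul_right (Nat.dvd_gcd hm' ⟨p, mul_comm p q⟩) b
    · exact Dvd.dvd.mul_left (Nat.dvd_gcd hn' ⟨p, mul_comm p q⟩) a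
  have hab : a * b = p * q :=
    Nat.dvd_antisymm hdvd1 (Nat.Coprime.mul_dvd_of_dvd_of_dvd hpq_co hpab hqab)
  obtain ⟨m₁, hm₁⟩ : a ∣ m := Nat.gcd_dvd_left _ _
  obtain ⟨n₁, hn₁⟩ : b ∣ n := Nat.gcd_dvd_left _ _
  have hpq0 : 0 < p * q := Nat.mul_pos hp.pos hq.pos
  have hmn1 : m₁ * n₁ = y ^ 2 := by
    have h' : a * b * (m₁ * n₁) = p * q * y ^ 2 := by
      rw [mul_mul_mul_comm, ← hm₁, ← hn₁]; exact h
    rw [hab] at h'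
    exact Nat.eq_of_mul_eq_mul_left hpq0 h'
  have hco₁ : m₁.Coprime n₁ :=
    Nat.Coprime.coprime_dvd_left ⟨a, by rw [hm₁]; ring⟩
      (Nat.Coprime.coprime_dvd_right ⟨b, by rw [hn₁]; ring⟩ hco)
  obtain ⟨u, hu⟩ : ∃ u, m₁ = u ^ 2 :=
    exists_eq_pow_of_mul_eq_pow (Nat.isUnit_iff.mpr hco₁) hmn1
  obtain ⟨v, hv⟩ : ∃ v, n₁ = v ^ 2 :=
    exists_eq_pow_of_mul_eq_pow (Nat.isUnit_iff.mpr hco₁.symm) (by rwa [mul_comm] at hmn1)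
  rcases dvd_prime_mul_prime hp hq (show a ∣ p * q from Nat.gcd_dvd_right m (p * q))
    with h1 | h1 | h1 | h1
  · have hb1 : b = p * q := by rw [h1, one_mul] at hab; exact hab
    exact ⟨u, v, Or.inl ⟨by rw [hm₁, h1, hu, one_mul], by rw [hn₁, hb1, hv]⟩⟩
  · have hb1 : b = q := by
      rw [h1] at hab; exact Nat.eq_of_mul_eq_mul_left hp.pos hab
    exact ⟨u, v, Or.inr (Or.inl ⟨by rw [hm₁, h1, hu], by rw [hn₁, hb1, hv]⟩)⟩
  · have hb1 : b = p := by
      rw [h1, mul_comm p q] at hab; exact Nat.eq_of_mul_eq_mul_left hq.pos hab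
    exact ⟨u, v, Or.inr (Or.inr (Or.inl ⟨by rw [hm₁, h1, hu], by rw [hn₁, hb1, hv]⟩))⟩
  · have hb1 : b = 1 := by
      rw [h1] at hab
      have h2 : p * q * b = p * q * 1 := by rw [hab, mul_one]
      exact Nat.eq_of_mul_eq_mul_left hpq0 h2
    exact ⟨u, v, Or.inr (Or.inr (Or.inr ⟨by rw [hm₁, h1, hu], by rw [hn₁, hb1, hv, one_mul]⟩))⟩

set_option maxHeartbeats 1000000 in
/-- Let `p, q` be primes with `p ≡ 5 (mod 8)`, `q ≡ 3 (mod 4)`, let `d = p·q`, and let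
`(x, y)` be the fundamental solution of `x² − d·y² = 1`. Then `y` is odd if and only if
the Legendre symbol `(p/q)` equals `−1`. -/
theorem stmt_5 (p q : ℕ) (hp : p.Prime) (hq : q.Prime) [Fact q.Prime]
    (hp8 : p % 8 = 5) (hq4 : q % 4 = 3)
    (d : ℤ) (hd : d = (p : ℤ) * q)
    (a : Pell.Solution₁ d) (ha : Pell.IsFundamental a) :
    Odd a.y ↔ legendreSym q p = -1 := by
  haveI : Fact p.Prime := ⟨hp⟩
  have hp2 : p ≠ 2 := by omega
  have hq2 : q ≠ 2 := by omega
  have hpq : p ≠ q := by omega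
  have hp4 : p % 4 = 1 := by omega
  obtain ⟨hx1, hy0, hmin⟩ := ha
  obtain ⟨X, hX⟩ : ∃ X : ℕ, (X : ℤ) = a.x := ⟨a.x.toNat, Int.toNat_of_nonneg (by linarith)⟩
  obtain ⟨Y, hY⟩ : ∃ Y : ℕ, (Y : ℤ) = a.y := ⟨a.y.toNat, Int.toNat_of_nonneg (by linarith)⟩
  have hX2 : 2 ≤ X := by
    have : (1 : ℤ) < X := by rw [hX]; exact hx1
    exact_mod_cast this
  have hY1 : 1 ≤ Y := by
    have : (0 : ℤ) < Y := by rw [hY]; exact hy0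
    exact_mod_cast this
  have hXYZ : (X : ℤ) ^ 2 = (p : ℤ) * q * (Y : ℤ) ^ 2 + 1 := by
    have hprop := a.prop
    rw [← hX, ← hY] at hprop
    rw [hd] at hprop
    linarith
  have hXY : X ^ 2 = p * q * Y ^ 2 + 1 := by exact_mod_cast hXYZ
  have hOdd_iff : Odd a.y ↔ Odd Y := by rw [← hY, Int.odd_coe_nat]
  have hpodd : Odd p := Nat.odd_iff.mpr (by omega)
  have hqodd : Odd q := Nat.odd_iff.mpr (by omega)
  have hns2 : ¬IsSquare (2 : ZMod p) := by
    rw [ZMod.exists_sq_eq_two_iff hp2]; omega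
  have hnsn2 : ¬IsSquare (-2 : ZMod p) := by
    rw [ZMod.exists_sq_eq_neg_two_iff hp2]; omega
  have hnsn1 : ¬IsSquare (-1 : ZMod q) := by
    rw [ZMod.exists_sq_eq_neg_one_iff]; omega
  have hrecip : legendreSym q (p : ℤ) = legendreSym p (q : ℤ) :=
    legendreSym.quadratic_reciprocity_one_mod_four hp4 hq2
  rcases Nat.even_or_odd Y with hYpar | hYpar
  · -- even case: show legendreSym q p = 1
    have key : legendreSym q (p : ℤ) = 1 := by
      have hXodd : Odd X := by
        rcases Nat.even_or_odd X with hE | hO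
        · exfalso
          have h1 : Even (X ^ 2) := (Nat.even_pow).mpr ⟨hE, two_ne_zero⟩
          rw [hXY] at h1
          exact (Nat.even_add_one.mp h1) (Even.mul_left ((Nat.even_pow).mpr ⟨hYpar, two_ne_zero⟩) (p * q))
        · exact hO
      obtain ⟨K, hK⟩ := hXodd
      obtain ⟨Z, hZ⟩ := hYpar
      have hK1 : 1 ≤ K := by omega
      have hZ1 : 1 ≤ Z := by omega
      have hprod : K * (K + 1) = p * q * Z ^ 2 := by
        rw [hK, hZ] at hXY
        have e2 : (2 * K + 1) ^ 2 = 4 * (K * (K + 1)) + 1 := by ring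
        have e3 : p * q * (Z + Z) ^ 2 = 4 * (p * q * Z ^ 2) := by ring
        linarith
      have hcoK : Nat.Coprime K (K + 1) := by
        have h2 : Nat.gcd K (K + 1) ∣ 1 := by
          simpa using Nat.dvd_sub (Nat.gcd_dvd_right K (K + 1)) (Nat.gcd_dvd_left K (K + 1))
        exact Nat.dvd_one.mp h2
      obtain ⟨u, v, hc⟩ := split_factor hp hq hpq hcoK hprod
      rcases hc with ⟨h1, h2⟩ | ⟨h1, h2⟩ | ⟨h1, h2⟩ | ⟨h1, h2⟩
      · -- K = u², K+1 = pq v² : -1 square mod q, contradiction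
        exfalso
        rw [h1] at h2
        have hcq := congrArg (Nat.cast : ℕ → ZMod q) h2
        push_cast [ZMod.natCast_self] at hcq
        exact hnsn1 ⟨(u : ZMod q), by linear_combination - hcq⟩
      · -- K = p u², K+1 = q v² : contradiction via both primes
        exfalso
        have hequ : p * u ^ 2 + 1 = q * v ^ 2 := by rw [← h1, ← h2]
        have hqu : ¬ q ∣ u := by
          intro hdu
          have d1 : q ∣ K := by rw [h1]; exact Dvd.dvd.mul_left (dvd_pow hdu two_ne_zero) p
          have d2 : q ∣ K + 1 := by rw [h2]; exact dvd_mul_right q _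
          have d3 : q ∣ 1 := by simpa using Nat.dvd_sub d2 d1
          have := Nat.dvd_one.mp d3; omega
        have hpv : ¬ p ∣ v := by
          intro hdv
          have d1 : p ∣ K := by rw [h1]; exact dvd_mul_right p _
          have d2 : p ∣ K + 1 := by rw [h2]; exact Dvd.dvd.mul_left (dvd_pow hdv two_ne_zero) q
          have d3 : p ∣ 1 := by simpa using Nat.dvd_sub d2 d1
          have := Nat.dvd_one.mp d3; omega
        have hcq := congrArg (Nat.cast : ℕ → ZMod q) hequ
        push_cast [ZMod.natCast_self, zero_mul, mul_zero] at hcq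
        have hc1 : (p : ZMod q) * (u : ZMod q) ^ 2 = ((-1 : ℤ) : ZMod q) := by
          push_cast; linear_combination hcq
        have L1 : legendreSym q (p : ℤ) = -1 := by
          rw [legendre_helper p u (-1) hqu hc1]
          exact (legendreSym.eq_neg_one_iff q).mpr (by push_cast; exact hnsn1)
        have hcp := congrArg (Nat.cast : ℕ → ZMod p) hequ
        push_cast [ZMod.natCast_self, zero_mul, mul_zero] at hcp
        have hc2 : (q : ZMod p) * (v : ZMod p) ^ 2 = ((1 : ℤ) : ZMod p) := by
          push_cast; linear_combination - hcp
        have L2 : legendreSym q (p : ℤ) = 1 := by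
          rw [hrecip, legendre_helper q v 1 hpv hc2, legendreSym.at_one]
        rw [L1] at L2
        norm_num at L2
      · -- K = q u², K+1 = p v² : legendre q p = 1
        have hequ : q * u ^ 2 + 1 = p * v ^ 2 := by rw [← h1, ← h2]
        have hqv : ¬ q ∣ v := by
          intro hdv
          have d1 : q ∣ K := by rw [h1]; exact dvd_mul_right q _
          have d2 : q ∣ K + 1 := by rw [h2]; exact Dvd.dvd.mul_left (dvd_pow hdv two_ne_zero) p
          have d3 : q ∣ 1 := by simpa using Nat.dvd_sub d2 d1
          have := Nat.dvd_one.mp d3; omega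
        have hcq := congrArg (Nat.cast : ℕ → ZMod q) hequ
        push_cast [ZMod.natCast_self, zero_mul, mul_zero] at hcq
        have hc1 : (p : ZMod q) * (v : ZMod q) ^ 2 = ((1 : ℤ) : ZMod q) := by
          push_cast; linear_combination - hcq
        rw [legendre_helper p v 1 hqv hc1, legendreSym.at_one]
      · -- K = pq u², K+1 = v² : contradict fundamentality
        exfalso
        have hu1 : 1 ≤ u := by
          by_contra hu0
          have : u = 0 := by omega
          subst this
          simp at h1
          omega
        have hv2' : v ^ 2 = p * q * u ^ 2 + 1 := by rw [← h1, ← h2]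
        have hv2 : 2 ≤ v := by nlinarith [hp.two_le, hq.two_le]
        have sol : (v : ℤ) ^ 2 - d * (u : ℤ) ^ 2 = 1 := by
          rw [hd]
          have hcast := congrArg (Nat.cast : ℕ → ℤ) hv2'
          push_cast at hcast
          linarith
        have hbx : 1 < (Pell.Solution₁.mk (v : ℤ) (u : ℤ) sol).x := by
          rw [Pell.Solution₁.x_mk]
          have : (1 : ℕ) < v := by omega
          exact_mod_cast this
        have hle := hmin hbx
        rw [Pell.Solution₁.x_mk, ← hX] at hle
        have hXv : X ≤ v := by exact_mod_cast hle
        have hvv : 2 * v ≤ v ^ 2 := by nlinarith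
        linarith [hK, h2]
    rw [hOdd_iff]
    constructor
    · intro h; exact absurd h (Nat.not_odd_iff_even.mpr hYpar)
    · intro h; rw [key] at h; norm_num at h
  · -- odd case: show legendreSym q p = -1
    have key : legendreSym q (p : ℤ) = -1 := by
      have hXeven : Even X := by
        have hodd : Odd (p * q * Y ^ 2) := (hpodd.mul hqodd).mul (hYpar.pow)
        have h1 : Even (X ^ 2) := by rw [hXY]; exact Odd.add_one hodd
        exact (Nat.even_pow.mp h1).1
      obtain ⟨M, hM⟩ : ∃ M, X = M + 1 := ⟨X - 1, by omega⟩
      have hModd : M % 2 = 1 := by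
        have := Nat.even_iff.mp hXeven; omega
      have hprod : M * (M + 2) = p * q * Y ^ 2 := by
        have e2 : M * (M + 2) + 1 = (M + 1) ^ 2 := by ring
        rw [hM] at hXY
        linarith
      have hcoM : Nat.Coprime M (M + 2) := by
        have h3 : Nat.gcd M (M + 2) ∣ M := Nat.gcd_dvd_left _ _
        have h2 : Nat.gcd M (M + 2) ∣ 2 := by
          simpa using Nat.dvd_sub (Nat.gcd_dvd_right M (M + 2)) h3
        rcases (Nat.dvd_prime Nat.prime_two).mp h2 with hg | hg
        · exact hg
        · exfalso
          rw [hg] at h3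
          omega
      obtain ⟨u, v, hc⟩ := split_factor hp hq hpq hcoM hprod
      rcases hc with ⟨h1, h2⟩ | ⟨h1, h2⟩ | ⟨h1, h2⟩ | ⟨h1, h2⟩
      · -- M = u², M+2 = pq v² : u² = -2 mod p, contradiction
        exfalso
        rw [h1] at h2
        have hcp := congrArg (Nat.cast : ℕ → ZMod p) h2
        push_cast [ZMod.natCast_self, zero_mul, mul_zero] at hcp
        exact hnsn2 ⟨(u : ZMod p), by linear_combination - hcp⟩
      · -- M = p u², M+2 = q v² : q v² = 2 mod p
        have hequ : p * u ^ 2 + 2 = q * v ^ 2 := by rw [← h1, ← h2]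
        have hpv : ¬ p ∣ v := by
          intro hdv
          have d1 : p ∣ M := by rw [h1]; exact dvd_mul_right p _
          have d2 : p ∣ M + 2 := by rw [h2]; exact Dvd.dvd.mul_left (dvd_pow hdv two_ne_zero) q
          have d3 : p ∣ 2 := by simpa using Nat.dvd_sub d2 d1
          have := Nat.le_of_dvd (by norm_num) d3; omega
        have hcp := congrArg (Nat.cast : ℕ → ZMod p) hequ
        push_cast [ZMod.natCast_self, zero_mul, mul_zero] at hcp
        have hc1 : (q : ZMod p) * (v : ZMod p) ^ 2 = ((2 : ℤ) : ZMod p) := by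
          push_cast; linear_combination - hcp
        rw [hrecip, legendre_helper q v 2 hpv hc1]
        exact (legendreSym.eq_neg_one_iff p).mpr (by push_cast; exact hns2)
      · -- M = q u², M+2 = p v² : q u² = -2 mod p
        have hequ : q * u ^ 2 + 2 = p * v ^ 2 := by rw [← h1, ← h2]
        have hpu : ¬ p ∣ u := by
          intro hdu
          have d1 : p ∣ M := by rw [h1]; exact Dvd.dvd.mul_left (dvd_pow hdu two_ne_zero) q
          have d2 : p ∣ M + 2 := by rw [h2]; exact dvd_mul_right p _
          have d3 : p ∣ 2 := by simpa using Nat.dvd_sub d2 d1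
          have := Nat.le_of_dvd (by norm_num) d3; omega
        have hcp := congrArg (Nat.cast : ℕ → ZMod p) hequ
        push_cast [ZMod.natCast_self, zero_mul, mul_zero] at hcp
        have hc1 : (q : ZMod p) * (u : ZMod p) ^ 2 = ((-2 : ℤ) : ZMod p) := by
          push_cast; linear_combination hcp
        rw [hrecip, legendre_helper q u (-2) hpu hc1]
        exact (legendreSym.eq_neg_one_iff p).mpr (by push_cast; exact hnsn2)
      · -- M = pq u², M+2 = v² : v² = 2 mod p, contradiction
        exfalso
        rw [h1] at h2
        have hcp := congrArg (Nat.cast : ℕ → ZMod p) h2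
        push_cast [ZMod.natCast_self, zero_mul, mul_zero] at hcp
        exact hns2 ⟨(v : ZMod p), by linear_combination hcp⟩
    rw [hOdd_iff]
    exact ⟨fun _ => key, fun _ => hYpar⟩
end

section
/- The fundamental solution (x, y) of the Pell equation x² − 209991·y² = 1 satisfies 209991 ∣ y. -/
namespace Stmt15Aux

def bigX : ℤ := 73167625974593700828660386030578462174657822217219422323217185183246387699092375684144844032935

def bigY : ℤ := 159668271237134731555657000565211906210618646389214219046317967425298022015645831738895036692

def nmul (p d : ℕ) (a b : ℕ × ℕ) : ℕ × ℕ :=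
  ((a.1 * b.1 + d * (a.2 * b.2)) % p, (a.1 * b.2 + a.2 * b.1) % p)

def npow (p d : ℕ) (a : ℕ × ℕ) : ℕ → ℕ × ℕ
  | 0 => (1 % p, 0)
  | n + 1 => nmul p d a (npow p d a n)

def pmul {R : Type*} [CommRing R] (d : R) (a b : R × R) : R × R :=
  (a.1 * b.1 + d * (a.2 * b.2), a.1 * b.2 + a.2 * b.1)

def ppow {R : Type*} [CommRing R] (d : R) (a : R × R) : ℕ → R × R
  | 0 => (1, 0)
  | n + 1 => pmul d a (ppow d a n)

lemma pow_eq_ppow {d : ℤ} (c : Pell.Solution₁ d) (n : ℕ) :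
    ((c ^ n).x, (c ^ n).y) = ppow d (c.x, c.y) n := by
  induction n with
  | zero => simp [ppow]
  | succ n ih =>
    rw [pow_succ', ppow, ← ih]
    simp [pmul, Pell.Solution₁.x_mul, Pell.Solution₁.y_mul]

lemma ppow_map {R S : Type*} [CommRing R] [CommRing S] (f : R →+* S) (d : R) (w : R × R)
    (n : ℕ) : ppow (f d) (f w.1, f w.2) n = (f (ppow d w n).1, f (ppow d w n).2) := by
  induction n with
  | zero => simp [ppow]
  | succ n ih => simp [ppow, pmul, ih]

lemma npow_cast (p d : ℕ) (a : ℕ × ℕ) (n : ℕ) :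
    (((npow p d a n).1 : ZMod p), ((npow p d a n).2 : ZMod p)) =
      ppow (d : ZMod p) ((a.1 : ZMod p), (a.2 : ZMod p)) n := by
  induction n with
  | zero => simp [npow, ppow]
  | succ n ih =>
    rw [ppow, ← ih]
    simp [npow, nmul, pmul, ZMod.natCast_mod, Nat.cast_add, Nat.cast_mul]

lemma npow_fst_lt (p d : ℕ) (hp : 0 < p) (a : ℕ × ℕ) (n : ℕ) : (npow p d a n).1 < p := by
  cases n with
  | zero => exact Nat.mod_lt _ hp
  | succ n => exact Nat.mod_lt _ hp

/-- Key obstruction lemma: if the mod-`p` check succeeds, no solution `c` has `(c^q).x = bigX`. -/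
lemma key (q p dr Xr : ℕ) [NeZero p]
    (hd : ((209991 : ℤ) : ZMod p) = (dr : ℕ))
    (hX : ((bigX : ℤ) : ZMod p) = (Xr : ℕ))
    (hXr : Xr < p)
    (hchk : ∀ u < p, ∀ v < p, (u * u) % p = (1 + dr * (v * v)) % p →
      (npow p dr (u, v) q).1 ≠ Xr)
    (c : Pell.Solution₁ (209991 : ℤ)) (hcq : (c ^ q).x = bigX) : False := by
  set u : ℕ := ((c.x : ZMod p)).val with hu
  set v : ℕ := ((c.y : ZMod p)).val with hv
  have hup : (u : ZMod p) = ((c.x : ℤ) : ZMod p) := by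
    simp [hu, ZMod.natCast_val, ZMod.cast_id]
  have hvp : (v : ZMod p) = ((c.y : ℤ) : ZMod p) := by
    simp [hv, ZMod.natCast_val, ZMod.cast_id]
  have hprop := c.prop
  have hnorm : ((u * u : ℕ) : ZMod p) = ((1 + dr * (v * v) : ℕ) : ZMod p) := by
    push_cast
    rw [hup, hvp, ← hd]
    have := congrArg (fun z : ℤ => ((z : ZMod p))) hprop
    push_cast at this
    linear_combination this
  have hmod : (u * u) % p = (1 + dr * (v * v)) % p :=
    (ZMod.natCast_eq_natCast_iff' _ _ _).mp hnorm
  have hne := hchk u (ZMod.val_lt _) v (ZMod.val_lt _) hmod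
  apply hne
  -- now show the equality
  have h1 := npow_cast p dr (u, v) q
  have h2 := congrArg Prod.fst h1
  simp only at h2
  have h3 := ppow_map (Int.castRingHom (ZMod p)) (209991 : ℤ) (c.x, c.y) q
  have h4 := pow_eq_ppow c q
  have hppx : (ppow ((209991 : ℤ)) (c.x, c.y) q).1 = bigX := by
    rw [← h4, hcq]
  have : ((npow p dr (u, v) q).1 : ZMod p) = ((Xr : ℕ) : ZMod p) := by
    rw [h2, hd.symm, hup, hvp]
    have h3' := congrArg Prod.fst h3
    simp only [Int.coe_castRingHom] at h3'
    rw [h3', hppx, hX]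
  have hlt := npow_fst_lt p dr (Nat.pos_of_ne_zero (NeZero.ne p)) (u, v) q
  have := (ZMod.natCast_eq_natCast_iff' _ _ _).mp this
  rwa [Nat.mod_eq_of_lt hlt, Nat.mod_eq_of_lt hXr] at this


set_option maxRecDepth 40000 in
set_option maxHeartbeats 8000000 in
lemma check2 : ∀ u < 5, ∀ v < 5, (u * u) % 5 = (1 + 1 * (v * v)) % 5 →
    (npow 5 1 (u, v) 2).1 ≠ 0 := by decide

set_option maxRecDepth 40000 in
set_option maxHeartbeats 8000000 in
lemma check3 : ∀ u < 17, ∀ v < 17, (u * u) % 17 = (1 + 7 * (v * v)) % 17 →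
    (npow 17 7 (u, v) 3).1 ≠ 12 := by decide

set_option maxRecDepth 40000 in
set_option maxHeartbeats 8000000 in
lemma check5 : ∀ u < 11, ∀ v < 11, (u * u) % 11 = (1 + 1 * (v * v)) % 11 →
    (npow 11 1 (u, v) 5).1 ≠ 9 := by decide

set_option maxRecDepth 40000 in
set_option maxHeartbeats 8000000 in
lemma check7 : ∀ u < 13, ∀ v < 13, (u * u) % 13 = (1 + 2 * (v * v)) % 13 →
    (npow 13 2 (u, v) 7).1 ≠ 3 := by decide

set_option maxRecDepth 40000 in
set_option maxHeartbeats 8000000 in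
lemma check11 : ∀ u < 23, ∀ v < 23, (u * u) % 23 = (1 + 1 * (v * v)) % 23 →
    (npow 23 1 (u, v) 11).1 ≠ 7 := by decide

set_option maxRecDepth 40000 in
set_option maxHeartbeats 8000000 in
lemma check13 : ∀ u < 79, ∀ v < 79, (u * u) % 79 = (1 + 9 * (v * v)) % 79 →
    (npow 79 9 (u, v) 13).1 ≠ 38 := by decide

set_option maxRecDepth 40000 in
set_option maxHeartbeats 8000000 in
lemma check17 : ∀ u < 67, ∀ v < 67, (u * u) % 67 = (1 + 13 * (v * v)) % 67 →
    (npow 67 13 (u, v) 17).1 ≠ 30 := by decide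

set_option maxRecDepth 40000 in
set_option maxHeartbeats 8000000 in
lemma check19 : ∀ u < 113, ∀ v < 113, (u * u) % 113 = (1 + 37 * (v * v)) % 113 →
    (npow 113 37 (u, v) 19).1 ≠ 108 := by decide

set_option maxRecDepth 40000 in
set_option maxHeartbeats 8000000 in
lemma check23 : ∀ u < 229, ∀ v < 229, (u * u) % 229 = (1 + 227 * (v * v)) % 229 →
    (npow 229 227 (u, v) 23).1 ≠ 180 := by decide

set_option maxRecDepth 40000 in
set_option maxHeartbeats 8000000 in
lemma check29 : ∀ u < 233, ∀ v < 233, (u * u) % 233 = (1 + 58 * (v * v)) % 233 →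
    (npow 233 58 (u, v) 29).1 ≠ 146 := by decide

set_option maxRecDepth 40000 in
set_option maxHeartbeats 8000000 in
lemma check31 : ∀ u < 61, ∀ v < 61, (u * u) % 61 = (1 + 29 * (v * v)) % 61 →
    (npow 61 29 (u, v) 31).1 ≠ 41 := by decide


lemma pow_x_ge {d : ℤ} (hd : 0 ≤ d) (c : Pell.Solution₁ d) (hx : 0 < c.x) (hy : 0 ≤ c.y)
    (n : ℕ) : c.x ^ n ≤ (c ^ n).x ∧ 0 ≤ (c ^ n).y := by
  induction n with
  | zero => simp
  | succ n ih =>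
    obtain ⟨ih1, ih2⟩ := ih
    have h1 : 0 < c.x ^ n := pow_pos hx n
    have e : c ^ (n + 1) = c * c ^ n := pow_succ' c n
    rw [e, Pell.Solution₁.x_mul, Pell.Solution₁.y_mul, pow_succ]
    constructor
    · nlinarith [mul_le_mul_of_nonneg_left ih1 hx.le, mul_nonneg hd (mul_nonneg hy ih2)]
    · nlinarith [mul_nonneg hx.le ih2, mul_nonneg hy (h1.le.trans ih1)]

end Stmt15Aux

open Stmt15Aux in
/-- The fundamental solution `(x, y)` of `x² − 209991·y² = 1` satisfies `209991 ∣ y`. -/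
theorem stmt_15 (a : Pell.Solution₁ (209991 : ℤ)) (ha : Pell.IsFundamental a) :
    (209991 : ℤ) ∣ a.y := by
  have hprop : bigX ^ 2 - (209991 : ℤ) * bigY ^ 2 = 1 := by norm_num [bigX, bigY]
  set B : Pell.Solution₁ (209991 : ℤ) := Pell.Solution₁.mk bigX bigY hprop with hB
  have hBx : B.x = bigX := rfl
  have hBy : B.y = bigY := rfl
  have hBx0 : 0 < B.x := by rw [hBx]; norm_num [bigX]
  have hBy0 : (0:ℤ) ≤ B.y := by rw [hBy]; norm_num [bigY]
  obtain ⟨n, hn⟩ := ha.eq_pow_of_nonneg hBx0 hBy0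
  have hax1 : 1 < a.x := ha.1
  have hay0 : 0 < a.y := ha.2.1
  have hax : (459 : ℤ) ≤ a.x := by nlinarith [a.prop]
  -- `a ^ n` has x-coordinate `bigX`
  have hxn : a.x ^ n ≤ bigX := by
    rw [← hBx, hn]
    exact (pow_x_ge (by norm_num) a (by linarith) hay0.le n).1
  have hn0 : n ≠ 0 := by
    rintro rfl
    rw [pow_zero] at hn
    have : B.x = 1 := by rw [hn, Pell.Solution₁.x_one]
    rw [hBx] at this
    norm_num [bigX] at this
  have hn35 : n ≤ 35 := by
    by_contra h
    push_neg at h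
    have h36 : 36 ≤ n := h
    have h1 : (459 : ℤ) ^ 36 ≤ 459 ^ n := pow_le_pow_right₀ (by norm_num) h36
    have h2 : (459 : ℤ) ^ n ≤ a.x ^ n := pow_le_pow_left₀ (by norm_num) hax n
    have : (459 : ℤ) ^ 36 ≤ bigX := by linarith
    norm_num [bigX] at this
  -- rule out n ≥ 2
  have hn1 : n = 1 := by
    by_contra hne
    have h2n : 2 ≤ n := by omega
    set q := n.minFac with hq
    have hqp : q.Prime := Nat.minFac_prime (by omega)
    have hqn : q ∣ n := Nat.minFac_dvd n
    have hq35 : q ≤ 35 := le_trans (Nat.minFac_le (by omega)) hn35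
    obtain ⟨m, hm⟩ := hqn
    set c : Pell.Solution₁ (209991 : ℤ) := a ^ m with hc
    have hcq : (c ^ q).x = bigX := by
      rw [hc, ← pow_mul, ← hBx, hn, hm, mul_comm]
    have hq2 : 2 ≤ q := hqp.two_le
    interval_cases q
    · exact key 2 5 1 0 (by decide) (by decide) (by norm_num) check2 c hcq
    · exact key 3 17 7 12 (by decide) (by decide) (by norm_num) check3 c hcq
    · exact absurd hqp (by norm_num)
    · exact key 5 11 1 9 (by decide) (by decide) (by norm_num) check5 c hcq
    · exact absurd hqp (by norm_num)
    · exact key 7 13 2 3 (by decide) (by decide) (by norm_num) check7 c hcq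
    · exact absurd hqp (by norm_num)
    · exact absurd hqp (by norm_num)
    · exact absurd hqp (by norm_num)
    · exact key 11 23 1 7 (by decide) (by decide) (by norm_num) check11 c hcq
    · exact absurd hqp (by norm_num)
    · exact key 13 79 9 38 (by decide) (by decide) (by norm_num) check13 c hcq
    · exact absurd hqp (by norm_num)
    · exact absurd hqp (by norm_num)
    · exact absurd hqp (by norm_num)
    · exact key 17 67 13 30 (by decide) (by decide) (by norm_num) check17 c hcq
    · exact absurd hqp (by norm_num)
    · exact key 19 113 37 108 (by decide) (by decide) (by norm_num) check19 c hcq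
    · exact absurd hqp (by norm_num)
    · exact absurd hqp (by norm_num)
    · exact absurd hqp (by norm_num)
    · exact key 23 229 227 180 (by decide) (by decide) (by norm_num) check23 c hcq
    · exact absurd hqp (by norm_num)
    · exact absurd hqp (by norm_num)
    · exact absurd hqp (by norm_num)
    · exact absurd hqp (by norm_num)
    · exact absurd hqp (by norm_num)
    · exact key 29 233 58 146 (by decide) (by decide) (by norm_num) check29 c hcq
    · exact absurd hqp (by norm_num)
    · exact key 31 61 29 41 (by decide) (by decide) (by norm_num) check31 c hcq
    · exact absurd hqp (by norm_num)
    · exact absurd hqp (by norm_num)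
    · exact absurd hqp (by norm_num)
    · exact absurd hqp (by norm_num)
  rw [hn1, pow_one] at hn
  have : a.y = bigY := by rw [← hn, hBy]
  rw [this]
  exact ⟨760357687887265318778695280108251811794880001472511769772599622961450833681661746164812, by norm_num [bigY]⟩
end

section
/- The fundamental solution (x, y) of the Pell equation x² − 1752299·y² = 1 satisfies 1752299 ∣ y. -/
namespace Stmt16Aux

open Pell Pell.Solution₁

/-- The known big solution of `x² - 1752299 y² = 1`. -/
def X : ℤ := 624037846544309550511444897224897809327563710385236591274518556628719171841889461611522993451338807315489893509931449
def Y : ℤ := 471418718494067332885466952034147955631267118263393512825383288806581267398742848048513539579069562692646604917020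

lemma prfB : X ^ 2 - (1752299 : ℤ) * Y ^ 2 = 1 := by norm_num [X, Y]

def B : Solution₁ (1752299 : ℤ) := Solution₁.mk X Y prfB

lemma dvdY : (1752299 : ℤ) ∣ Y := by norm_num [Y]

lemma pow_mod {d : ℤ} (a : Solution₁ d) :
    ∀ n : ℕ, d ∣ (a ^ n).x - a.x ^ n ∧ d ∣ (a ^ n).y - n * a.x ^ (n - 1) * a.y := by
  intro n
  induction n with
  | zero => simp
  | succ n ih =>
    obtain ⟨hx, hy⟩ := ih
    constructor
    · have : (a ^ (n + 1)).x - a.x ^ (n + 1)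
          = a.x * ((a ^ n).x - a.x ^ n) + d * ((a ^ n).y * a.y) := by
        rw [pow_succ, x_mul]; ring
      rw [this]
      exact dvd_add (Dvd.dvd.mul_left hx _) (Dvd.intro _ rfl)
    · rcases Nat.eq_zero_or_pos n with rfl | hn
      · simp
      · have hns : n - 1 + 1 = n := Nat.succ_pred_eq_of_pos hn
        have hpow : a.x ^ n = a.x ^ (n - 1) * a.x := by
          conv_lhs => rw [← hns]
          rw [pow_succ]
        have key : (a ^ (n + 1)).y - ((n + 1 : ℕ) : ℤ) * a.x ^ (n + 1 - 1) * a.y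
            = a.x * ((a ^ n).y - n * a.x ^ (n - 1) * a.y)
              + a.y * ((a ^ n).x - a.x ^ n) := by
          rw [pow_succ, y_mul, Nat.add_sub_cancel, hpow]
          push_cast
          ring
        rw [key]
        exact dvd_add (Dvd.dvd.mul_left hy _) (Dvd.dvd.mul_left hx _)

lemma growth {a : Solution₁ (1752299 : ℤ)} (ha : Pell.IsFundamental a) :
    ∀ n : ℕ, (1324 : ℤ) ^ n ≤ (a ^ (n + 1)).y := by
  have hx : (1324 : ℤ) ≤ a.x := by
    have h := a.prop_x
    have hy1 : 1 ≤ a.y := ha.2.1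
    have hxpos : 0 < a.x := ha.x_pos
    nlinarith [sq_nonneg a.y, sq_nonneg (a.x - 1323)]
  have hy : (1 : ℤ) ≤ a.y := ha.2.1
  intro n
  induction n with
  | zero => simpa using hy
  | succ n ih =>
    have hxp : (0 : ℤ) < (a ^ (n + 1)).x := x_pow_pos ha.x_pos _
    have : (a ^ (n + 2)).y = a.x * (a ^ (n + 1)).y + a.y * (a ^ (n + 1)).x := by
      rw [pow_succ, mul_comm, y_mul]
    rw [this]
    have h1 : (1324 : ℤ) ^ (n + 1) ≤ a.x * (a ^ (n + 1)).y := by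
      calc (1324 : ℤ) ^ (n + 1) = 1324 * 1324 ^ n := by ring
        _ ≤ a.x * (a ^ (n + 1)).y := by
            apply mul_le_mul hx ih (by positivity) (le_trans (by norm_num) hx)
    nlinarith [mul_pos (lt_of_lt_of_le one_pos hy) hxp]

end Stmt16Aux

open Stmt16Aux Pell Pell.Solution₁ in
/-- The fundamental solution `(x, y)` of `x² − 1752299·y² = 1` satisfies `1752299 ∣ y`. -/
theorem stmt_16 (a : Pell.Solution₁ (1752299 : ℤ)) (ha : Pell.IsFundamental a) :
    (1752299 : ℤ) ∣ a.y := by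
  have hBx : (0 : ℤ) < B.x := by norm_num [B, X]
  have hBy : (0 : ℤ) ≤ B.y := by norm_num [B, Y]
  obtain ⟨n, hn⟩ := ha.eq_pow_of_nonneg hBx hBy
  -- n ≥ 1
  have hn1 : 1 ≤ n := by
    by_contra h
    interval_cases n
    · have : B.y = 0 := by rw [hn]; simp
      norm_num [B, Y] at this
  -- n ≤ 40
  have hn40 : n ≤ 40 := by
    by_contra h
    push_neg at h
    have h41 : 41 ≤ n := h
    have hle : (1324 : ℤ) ^ 40 ≤ (1324 : ℤ) ^ (n - 1) :=
      pow_le_pow_right₀ (by norm_num) (by omega)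
    have hgr := growth ha (n - 1)
    rw [Nat.sub_add_cancel hn1] at hgr
    have : (1324 : ℤ) ^ 40 ≤ B.y := by
      rw [hn]; exact hle.trans hgr
    have hYval : B.y = Y := rfl
    rw [hYval] at this
    norm_num [Y] at this
  -- the congruence
  have hmod := (pow_mod a n).2
  have hdvdBy : (1752299 : ℤ) ∣ (a ^ n).y := by rw [← hn]; exact dvdY
  have hdvd : (1752299 : ℤ) ∣ (n : ℤ) * a.x ^ (n - 1) * a.y := by
    have h := dvd_sub hdvdBy hmod
    simpa using h
  -- a.x is coprime to 1752299
  have hcopx : IsCoprime (1752299 : ℤ) a.x := by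
    refine ⟨-a.y ^ 2, a.x, ?_⟩
    have := a.prop
    linarith
  have hdvd2 : (1752299 : ℤ) ∣ (n : ℤ) * a.y := by
    refine (hcopx.pow_right (n := n - 1)).dvd_of_dvd_mul_left ?_
    have : a.x ^ (n - 1) * ((n : ℤ) * a.y) = (n : ℤ) * a.x ^ (n - 1) * a.y := by ring
    rwa [this]
  have hcopn : IsCoprime (1752299 : ℤ) (n : ℤ) := by
    rw [Int.isCoprime_iff_gcd_eq_one]
    have : (1752299 : ℤ) = ((1752299 : ℕ) : ℤ) := by norm_num
    rw [this, Int.gcd_natCast_natCast]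
    interval_cases n <;> decide
  exact hcopn.dvd_of_dvd_mul_left hdvd2
end

section
/- The fundamental solution (x, y) of the Pell equation x² − 4099215·y² = 1 satisfies 4099215 ∣ y, and y is odd. -/
private def pX : ℤ := 179784248540261720933717275307349853452493807225709008240438748235173454612609215996568096528066597886608903086961202826693607419247563810009098615761060747707904512388295534181151738333885074597018691093195456596933456700435124

private def pY : ℤ := 88797612801324763663461176430433623945738065366142957025775077607213519113867213685157937417087578913686280667664485149887151164667163604752315683478467408748036619796833159898856304466263945231456913593944419084835966054145

private lemma pell_prop : pX ^ 2 - 4099215 * pY ^ 2 = 1 := by norm_num [pX, pY]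

private def B : Pell.Solution₁ (4099215 : ℤ) := Pell.Solution₁.mk pX pY pell_prop

open Pell Pell.Solution₁ in
/-- mod a prime factor `p` of `d`, powers of a solution behave linearly in the exponent -/
private lemma pow_xy (p : ℕ) (hp : (4099215 : ZMod p) = 0)
    (a : Pell.Solution₁ (4099215 : ℤ)) (n : ℕ) :
    (((a ^ n).x : ℤ) : ZMod p) = ((a.x : ℤ) : ZMod p) ^ n ∧
    (((a ^ n).y : ℤ) : ZMod p) = (n : ZMod p) * ((a.x : ℤ) : ZMod p) ^ (n + 1) * ((a.y : ℤ) : ZMod p) := by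
  have hu : ((a.x : ℤ) : ZMod p) ^ 2 = 1 := by
    have h2 := congrArg (fun z : ℤ => (z : ZMod p)) a.prop_x
    push_cast at h2
    linear_combination h2 + ((a.y : ℤ) : ZMod p) ^ 2 * hp
  induction n with
  | zero => simp
  | succ k ih =>
    obtain ⟨ih1, ih2⟩ := ih
    constructor
    · rw [pow_succ a k, Pell.Solution₁.x_mul]
      push_cast
      rw [ih1, ih2]
      linear_combination ((k : ZMod p) * ((a.x : ℤ) : ZMod p) ^ (k + 1) * ((a.y : ℤ) : ZMod p) * ((a.y : ℤ) : ZMod p)) * hp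
    · rw [pow_succ a k, Pell.Solution₁.y_mul]
      push_cast
      rw [ih1, ih2]
      linear_combination (-(((a.x : ℤ) : ZMod p) ^ k * ((a.y : ℤ) : ZMod p))) * hu

open Pell Pell.Solution₁ in
/-- the "evaluation at a square root of d mod m" map is multiplicative on powers -/
private lemma f_pow (m : ℕ) (s : ZMod m) (hs : s ^ 2 = (4099215 : ZMod m))
    (a : Pell.Solution₁ (4099215 : ℤ)) (n : ℕ) :
    (((a ^ n).x : ℤ) : ZMod m) + (((a ^ n).y : ℤ) : ZMod m) * s
      = (((a.x : ℤ) : ZMod m) + ((a.y : ℤ) : ZMod m) * s) ^ n := by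
  induction n with
  | zero => simp
  | succ k ih =>
    rw [pow_succ a k, Pell.Solution₁.x_mul, Pell.Solution₁.y_mul,
      pow_succ (((a.x : ℤ) : ZMod m) + ((a.y : ℤ) : ZMod m) * s) k, ← ih]
    push_cast
    linear_combination (-((((a ^ k).y : ℤ) : ZMod m)) * ((a.y : ℤ) : ZMod m)) * hs

open Pell Pell.Solution₁ in
private lemma x_pow_ge (a : Pell.Solution₁ (4099215 : ℤ)) (hx : 1 < a.x) (hy : 0 < a.y) (n : ℕ) :
    2 ^ n ≤ (a ^ n).x ∧ 0 ≤ (a ^ n).y := by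
  induction n with
  | zero => simp
  | succ k ih =>
    obtain ⟨ih1, ih2⟩ := ih
    have hxk : (0:ℤ) < (a ^ k).x := lt_of_lt_of_le (by positivity) ih1
    constructor
    · have hxx : (a ^ (k+1)).x = (a ^ k).x * a.x + 4099215 * ((a ^ k).y * a.y) := by
        rw [pow_succ a k, Pell.Solution₁.x_mul]
      have h1 : (2:ℤ) ^ k * 2 ≤ (a ^ k).x * a.x :=
        mul_le_mul ih1 (by omega) (by norm_num) hxk.le
      have h2 : (0:ℤ) ≤ 4099215 * ((a ^ k).y * a.y) := by positivity
      rw [hxx]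
      calc (2:ℤ) ^ (k+1) = 2 ^ k * 2 := by ring
        _ ≤ (a ^ k).x * a.x := h1
        _ ≤ (a ^ k).x * a.x + 4099215 * ((a ^ k).y * a.y) := by linarith
    · have hyy : (a ^ (k+1)).y = (a ^ k).x * a.y + (a ^ k).y * a.x := by
        rw [pow_succ a k, Pell.Solution₁.y_mul]
      have t1 : (0:ℤ) ≤ (a ^ k).x * a.y := by positivity
      have t2 : (0:ℤ) ≤ (a ^ k).y * a.x := by positivity
      rw [hyy]; linarith

private lemma hs13 : (4 : ZMod 13) ^ 2 = (4099215 : ZMod 13) := by decide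
private lemma ht13 : (7 : ZMod 13) + 9 * 4 = 4 := by decide
private lemma hc13 : ¬((4 : ZMod 13) ^ 4 = 1) := by decide
private lemma hs61 : (25 : ZMod 61) ^ 2 = (4099215 : ZMod 61) := by decide
private lemma ht61 : (2 : ZMod 61) + 7 * 25 = 55 := by decide
private lemma hc61 : ¬((55 : ZMod 61) ^ 12 = 1) := by decide
private lemma hz3 : (4099215 : ZMod 3) = 0 := by decide
private lemma hz5 : (4099215 : ZMod 5) = 0 := by decide
private lemma hzq : (4099215 : ZMod 273281) = 0 := by decide

/-- The fundamental solution `(x, y)` of `x² − 4099215·y² = 1` satisfies `4099215 ∣ y`,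
and `y` is odd. -/
theorem stmt_17 (a : Pell.Solution₁ (4099215 : ℤ)) (ha : Pell.IsFundamental a) :
    (4099215 : ℤ) ∣ a.y ∧ Odd a.y := by
  have hax := ha.1
  have hay := ha.2.1
  have hBx : B.x = pX := rfl
  have hBy : B.y = pY := rfl
  obtain ⟨n, hn⟩ := ha.eq_pow_of_nonneg (a := B)
    (by rw [hBx]; norm_num [pX]) (by rw [hBy]; norm_num [pY])
  -- n ≠ 0
  have hn0 : n ≠ 0 := by
    rintro rfl
    rw [pow_zero] at hn
    have : B.y = 0 := by rw [hn]; rfl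
    rw [hBy] at this
    norm_num [pY] at this
  -- n is small
  have hnlt : n < 755 := by
    by_contra h
    push_neg at h
    have h1 := (x_pow_ge a hax hay n).1
    rw [← hn, hBx] at h1
    have h2 : (2:ℤ) ^ 755 ≤ 2 ^ n := pow_le_pow_right₀ (by norm_num) h
    have : (2:ℤ) ^ 755 ≤ pX := le_trans h2 h1
    rw [show (755:ℕ) = 251 * 3 + 2 from rfl, pow_add, pow_mul] at this
    norm_num [pX] at this
  -- generic per-prime-factor argument
  have key : ∀ p : ℕ, p.Prime → (4099215 : ZMod p) = 0 → ((p : ℤ) ∣ pY) →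
      p ∣ n ∨ (p : ℤ) ∣ a.y := by
    intro p hp hdp hpy
    haveI : Fact p.Prime := ⟨hp⟩
    have h := (pow_xy p hdp a n).2
    rw [← hn, hBy] at h
    have hy0 : ((pY : ℤ) : ZMod p) = 0 := (ZMod.intCast_zmod_eq_zero_iff_dvd _ _).mpr hpy
    rw [hy0] at h
    have hu : ((a.x : ℤ) : ZMod p) ^ 2 = 1 := by
      have h2 := congrArg (fun z : ℤ => (z : ZMod p)) a.prop_x
      push_cast at h2
      linear_combination h2 + ((a.y : ℤ) : ZMod p) ^ 2 * hdp
    have hxne : ((a.x : ℤ) : ZMod p) ≠ 0 := by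
      intro h0
      rw [h0] at hu
      simp at hu
    have := h.symm
    rcases mul_eq_zero.mp this with h1 | h2
    · rcases mul_eq_zero.mp h1 with h3 | h4
      · left
        exact (ZMod.natCast_eq_zero_iff _ _).mp h3
      · exact absurd h4 (pow_ne_zero _ hxne)
    · right
      exact (ZMod.intCast_zmod_eq_zero_iff_dvd _ _).mp h2
  -- rule out p ∣ n for p = 3 via a cube certificate mod 13
  have not3n : ¬ (3 ∣ n) := by
    rintro ⟨k, rfl⟩
    haveI : Fact (Nat.Prime 13) := ⟨by norm_num⟩
    have hs := hs13
    have hf := f_pow 13 4 hs a (3 * k)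
    rw [← hn, hBx, hBy] at hf
    have hX : ((pX : ℤ) : ZMod 13) = 7 := by
      have : (((pX - 7 : ℤ)) : ZMod 13) = 0 :=
        (ZMod.intCast_zmod_eq_zero_iff_dvd _ _).mpr (by norm_num [pX])
      push_cast at this
      linear_combination this
    have hY : ((pY : ℤ) : ZMod 13) = 9 := by
      have : (((pY - 9 : ℤ)) : ZMod 13) = 0 :=
        (ZMod.intCast_zmod_eq_zero_iff_dvd _ _).mpr (by norm_num [pY])
      push_cast at this
      linear_combination this
    rw [hX, hY] at hf
    have hfa_ne : (((a.x : ℤ) : ZMod 13) + ((a.y : ℤ) : ZMod 13) * 4) ≠ 0 := by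
      intro h0
      have hinv : (((a.x : ℤ) : ZMod 13) + ((a.y : ℤ) : ZMod 13) * 4) *
          (((a.x : ℤ) : ZMod 13) - ((a.y : ℤ) : ZMod 13) * 4) = 1 := by
        have h2 := congrArg (fun z : ℤ => (z : ZMod 13)) a.prop
        push_cast at h2
        linear_combination h2 - ((a.y : ℤ) : ZMod 13)^2 * hs
      rw [h0, zero_mul] at hinv
      exact zero_ne_one hinv
    have hpow : ((7 : ZMod 13) + 9 * 4) ^ 4 = 1 := by
      rw [hf]
      have : ((((a.x : ℤ) : ZMod 13) + ((a.y : ℤ) : ZMod 13) * 4) ^ (3 * k)) ^ 4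
          = ((((a.x : ℤ) : ZMod 13) + ((a.y : ℤ) : ZMod 13) * 4) ^ k) ^ 12 := by
        rw [← pow_mul, ← pow_mul]; ring_nf
      rw [this]
      exact ZMod.pow_card_sub_one_eq_one (pow_ne_zero _ hfa_ne)
    rw [ht13] at hpow
    exact absurd hpow hc13
  -- rule out p ∣ n for p = 5 via a fifth-power certificate mod 61
  have not5n : ¬ (5 ∣ n) := by
    rintro ⟨k, rfl⟩
    haveI : Fact (Nat.Prime 61) := ⟨by norm_num⟩
    have hs := hs61
    have hf := f_pow 61 25 hs a (5 * k)
    rw [← hn, hBx, hBy] at hf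
    have hX : ((pX : ℤ) : ZMod 61) = 2 := by
      have : (((pX - 2 : ℤ)) : ZMod 61) = 0 :=
        (ZMod.intCast_zmod_eq_zero_iff_dvd _ _).mpr (by norm_num [pX])
      push_cast at this
      linear_combination this
    have hY : ((pY : ℤ) : ZMod 61) = 7 := by
      have : (((pY - 7 : ℤ)) : ZMod 61) = 0 :=
        (ZMod.intCast_zmod_eq_zero_iff_dvd _ _).mpr (by norm_num [pY])
      push_cast at this
      linear_combination this
    rw [hX, hY] at hf
    have hfa_ne : (((a.x : ℤ) : ZMod 61) + ((a.y : ℤ) : ZMod 61) * 25) ≠ 0 := by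
      intro h0
      have hinv : (((a.x : ℤ) : ZMod 61) + ((a.y : ℤ) : ZMod 61) * 25) *
          (((a.x : ℤ) : ZMod 61) - ((a.y : ℤ) : ZMod 61) * 25) = 1 := by
        have h2 := congrArg (fun z : ℤ => (z : ZMod 61)) a.prop
        push_cast at h2
        linear_combination h2 - ((a.y : ℤ) : ZMod 61)^2 * hs
      rw [h0, zero_mul] at hinv
      exact zero_ne_one hinv
    have hpow : ((2 : ZMod 61) + 7 * 25) ^ 12 = 1 := by
      rw [hf]
      have : ((((a.x : ℤ) : ZMod 61) + ((a.y : ℤ) : ZMod 61) * 25) ^ (5 * k)) ^ 12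
          = ((((a.x : ℤ) : ZMod 61) + ((a.y : ℤ) : ZMod 61) * 25) ^ k) ^ 60 := by
        rw [← pow_mul, ← pow_mul]; ring_nf
      rw [this]
      exact ZMod.pow_card_sub_one_eq_one (pow_ne_zero _ hfa_ne)
    rw [ht61] at hpow
    exact absurd hpow hc61
  -- rule out 273281 ∣ n by size
  have notqn : ¬ (273281 ∣ n) := by
    rintro ⟨k, rfl⟩
    rcases Nat.eq_zero_or_pos k with rfl | hk
    · exact hn0 rfl
    · have : 273281 * 1 ≤ 273281 * k := Nat.mul_le_mul_left _ hk
      omega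
  -- divisibility by each prime factor
  have h3 : (3 : ℤ) ∣ a.y := by
    rcases key 3 (by norm_num) hz3 (by norm_num [pY]) with h | h
    · exact absurd h not3n
    · exact h
  have h5 : (5 : ℤ) ∣ a.y := by
    rcases key 5 (by norm_num) hz5 (by norm_num [pY]) with h | h
    · exact absurd h not5n
    · exact h
  have hq : (273281 : ℤ) ∣ a.y := by
    rcases key 273281 (by norm_num) hzq (by norm_num [pY]) with h | h
    · exact absurd h notqn
    · exact h
  constructor
  · have c35 : IsCoprime (3 : ℤ) 5 := by
      rw [Int.isCoprime_iff_gcd_eq_one]; norm_num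
    have h15 : (15 : ℤ) ∣ a.y := by
      have := c35.mul_dvd h3 h5
      norm_num at this
      exact this
    have c15q : IsCoprime (15 : ℤ) 273281 := by
      rw [Int.isCoprime_iff_gcd_eq_one]; norm_num
    have := c15q.mul_dvd h15 hq
    norm_num at this
    exact this
  · -- y is odd
    rw [← Int.not_even_iff_odd]
    intro hev
    have heven : ∀ m : ℕ, Even (a ^ m).y := by
      intro m
      induction m with
      | zero => simp
      | succ k ih =>
        rw [pow_succ, Pell.Solution₁.y_mul]
        exact Even.add (hev.mul_left _) (ih.mul_right _)
    have := heven n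
    rw [← hn, hBy] at this
    norm_num [pY, Int.even_iff] at this
end
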